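/- The operator U_1 = -T_1 - Z satisfies U_1² = u_1²·𝟙 on functions f : ℂ → ℂ (away from z = 0). -/

import Mathlib

noncomputable def T1op (t1 u1 : ℂ) (f : ℂ → ℂ) : ℂ → ℂ :=
  fun z => (t1 + u1 + z) * (t1 - u1 + z) / (2 * z) * (f (-z) - f z) + t1 * f z

/-- `U₁ = -T₁ - Z`, where `Z` is multiplication by `z`. -/
noncomputable def U1op (t1 u1 : ℂ) (f : ℂ → ℂ) : ℂ → ℂ :=
  fun z => -(T1op t1 u1 f z) - z * f z

/-- `U₁² = u₁² 𝟙` away from `z = 0`. -/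
theorem U1_sq (t1 u1 : ℂ) (f : ℂ → ℂ) (z : ℂ) (hz : z ≠ 0) :
    U1op t1 u1 (U1op t1 u1 f) z = u1 ^ 2 * f z := by
  simp only [U1op, T1op, neg_neg]
  have h4 : z ^ 4 ≠ 0 := pow_ne_zero 4 hz
  field_simp
  ring_nf
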